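/- Suppose (i) for every action a and aspects α, β, if d(α,β) and a has aspect β, then for every proposition X (predicate on worlds) and every world s, (⟨α⟩X)(s) ↔ (⟨α⟩X)(a(s)); and (ii) for every fluent p and aspect α, if p has aspect α then there exists a proposition q such that for all worlds s, p(s) ↔ (⟨α⟩q)(s). Then the non-interference axiom holds: for every fluent p, action a, and aspects α, β, if p has aspect α, a has aspect β, and d(α,β), then for all worlds s, p(s) ↔ p(a(s)) (i.e., p ≡ [a]p). -/
import Mathlib

/-- The modal operator `⟨α⟩` determined by the accessibility relation `R α`:
`(Dia R α X) s` holds iff `X` holds in some world `R α`-accessible from `s`. -/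
def Dia {S A : Type*} (R : A → S → S → Prop) (α : A) (X : S → Prop) : S → Prop :=
  fun s => ∃ t : S, R α s t ∧ X t

/-- Simple modal formalism, `⟨⟩` version: the non-interference axiom follows
from the two modal axioms. -/
theorem modal_dia_noninterference
    {S A : Type*} (R : A → S → S → Prop) (d : A → A → Prop)
    (fluentAspect : (S → Prop) → A → Prop) (actionAspect : (S → S) → A → Prop)
    (h1 : ∀ (a : S → S) (α β : A), d α β → actionAspect a β →
      ∀ (X : S → Prop) (s : S), Dia R α X s ↔ Dia R α X (a s))
    (h2 : ∀ (p : S → Prop) (α : A), fluentAspect p α →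
      ∃ q : S → Prop, ∀ s : S, p s ↔ Dia R α q s) :
    ∀ (p : S → Prop) (a : S → S) (α β : A),
      fluentAspect p α → actionAspect a β → d α β →
      ∀ s : S, p s ↔ p (a s) := by
  intro p a α β hp ha hd s
  obtain ⟨q, hq⟩ := h2 p α hp
  rw [hq, hq, h1 a α β hd ha q s]
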